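/- arXiv:2006.02172 — 2 statements merged into one kernel-verified Lean document; each statement's English description precedes it below -/
import Mathlib

section
/- Let G be a C¹ N-function with strictly increasing derivative g = G' and indices 1 < i_G ≤ s_G < ∞, and let G̃ be the Young conjugate. Then for 0 < a < b, the quantities ∫_a^b g⁻¹(s^{1−n}) ds and ∫_{b^{1−n}}^{a^{1−n}} G̃(t)·t^{−1−n'} dt (where n' = n/(n−1), n ≥ 2) are comparable, with comparison constants depending only on i_G, s_G, and n. In particular, ∫_0^1 g⁻¹(s^{1−n}) ds < ∞ if and only if ∫_1^∞ G̃(t)/t^{1+n'} dt < ∞. -/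
open Set MeasureTheory

private lemma rpow_neg_image_Ioo {p : ℝ} (hp : p < 0) {a b : ℝ} (ha : 0 < a) (hab : a < b) :
    (fun x : ℝ => x ^ p) '' Set.Ioo a b = Set.Ioo (b ^ p) (a ^ p) := by
  have hb : 0 < b := ha.trans hab
  ext t
  constructor
  · rintro ⟨x, hx, rfl⟩
    exact ⟨Real.rpow_lt_rpow_of_neg (ha.trans hx.1) hx.2 hp,
      Real.rpow_lt_rpow_of_neg ha hx.1 hp⟩
  · rintro ⟨h1, h2⟩
    have hbp : 0 < b ^ p := Real.rpow_pos_of_pos hb p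
    have hap : 0 < a ^ p := Real.rpow_pos_of_pos ha p
    have ht : 0 < t := hbp.trans h1
    have hpinv : p⁻¹ < 0 := inv_lt_zero.2 hp
    refine ⟨t ^ p⁻¹, ⟨?_, ?_⟩, ?_⟩
    · have := Real.rpow_lt_rpow_of_neg ht h2 hpinv
      rwa [← Real.rpow_mul ha.le, mul_inv_cancel₀ hp.ne, Real.rpow_one] at this
    · have := Real.rpow_lt_rpow_of_neg hbp h1 hpinv
      rwa [← Real.rpow_mul hb.le, mul_inv_cancel₀ hp.ne, Real.rpow_one] at this
    · show (t ^ p⁻¹) ^ p = t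
      rw [← Real.rpow_mul ht.le, inv_mul_cancel₀ hp.ne, Real.rpow_one]

private lemma rpow_neg_image_Ioo01 {p : ℝ} (hp : p < 0) :
    (fun x : ℝ => x ^ p) '' Set.Ioo 0 1 = Set.Ioi 1 := by
  ext t
  constructor
  · rintro ⟨x, hx, rfl⟩
    have := Real.rpow_lt_rpow_of_neg hx.1 hx.2 hp
    rw [Real.one_rpow] at this
    simpa using this
  · intro ht
    rw [Set.mem_Ioi] at ht
    have ht0 : (0:ℝ) < t := lt_trans one_pos ht
    have hpinv : p⁻¹ < 0 := inv_lt_zero.2 hp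
    refine ⟨t ^ p⁻¹, ⟨Real.rpow_pos_of_pos ht0 _, ?_⟩, ?_⟩
    · have := Real.rpow_lt_rpow_of_neg one_pos ht hpinv
      rwa [Real.one_rpow] at this
    · show (t ^ p⁻¹) ^ p = t
      rw [← Real.rpow_mul ht0.le, inv_mul_cancel₀ hp.ne, Real.rpow_one]

private lemma comparison_arith {q c1 I K : ℝ} (hq : 0 < q) (hc1 : 0 < c1)
    (hI : 0 ≤ I) (h3 : c1 * I ≤ K) (h4 : K ≤ I) :
    (q + (q * c1)⁻¹)⁻¹ * (q * K) ≤ I ∧ I ≤ (q + (q * c1)⁻¹) * (q * K) := by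
  have hc : 0 < q + (q * c1)⁻¹ := by positivity
  constructor
  · rw [inv_mul_le_iff₀ hc]
    nlinarith [mul_le_mul_of_nonneg_left h4 hq.le,
      mul_nonneg (inv_nonneg.2 (mul_nonneg hq.le hc1.le)) hI]
  · have h5 : (q * c1) * I ≤ q * K := by nlinarith [mul_le_mul_of_nonneg_left h3 hq.le]
    have h6 : I ≤ (q * c1)⁻¹ * (q * K) := by
      have h := mul_le_mul_of_nonneg_left h5 (inv_nonneg.2 (mul_nonneg hq.le hc1.le))
      rwa [← mul_assoc, inv_mul_cancel₀ (by positivity : (q * c1) ≠ 0), one_mul] at h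
    have h7 : 0 ≤ q * K := le_trans (by positivity : (0:ℝ) ≤ q * c1 * I) h5
    have h8 : (q * c1)⁻¹ * (q * K) ≤ (q + (q * c1)⁻¹) * (q * K) :=
      mul_le_mul_of_nonneg_right (le_add_of_nonneg_left hq.le) h7
    linarith

/-- For a C¹ N-function `G` with strictly increasing `g = G'`, indices
`1 < i_G ≤ s_G < ∞`, and Young conjugate `Gc`, the quantities
`∫_a^b g⁻¹(s^{1-n}) ds` and `∫_{b^{1-n}}^{a^{1-n}} Gc(t) t^{-1-n'} dt`
(`n' = n/(n-1)`) are comparable for all `0 < a < b`, with constants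
depending only on `i_G`, `s_G`, `n`; in particular the corresponding
integrability conditions are equivalent. -/
theorem wolff_integral_comparison
    (n : ℕ) (hn : 2 ≤ n)
    (G g ginv Gc : ℝ → ℝ) (iG sG : ℝ)
    (hG0 : G 0 = 0)
    (hGpos : ∀ t, 0 < t → 0 < G t)
    (hconv : ConvexOn ℝ (Set.Ici 0) G)
    (hlim0 : Filter.Tendsto (fun t => G t / t) (nhdsWithin 0 (Set.Ioi 0)) (nhds 0))
    (hlimtop : Filter.Tendsto (fun t => G t / t) Filter.atTop Filter.atTop)
    (hderiv : ∀ t, 0 < t → HasDerivAt G (g t) t)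
    (hgmono : StrictMonoOn g (Set.Ioi 0))
    (h1 : 1 < iG) (h2 : iG ≤ sG)
    (hbounds : ∀ t, 0 < t → iG ≤ t * g t / G t ∧ t * g t / G t ≤ sG)
    (hinv : ∀ t, 0 < t → 0 < ginv t ∧ g (ginv t) = t)
    (hinv' : ∀ t, 0 < t → ginv (g t) = t)
    (hconj : ∀ s, Gc s = sSup {y : ℝ | ∃ t, 0 < t ∧ y = s * t - G t}) :
    (∃ c > 0, ∀ a b : ℝ, 0 < a → a < b →
      c⁻¹ * ∫ t in (b ^ ((1:ℝ) - n))..(a ^ ((1:ℝ) - n)), Gc t / t ^ (1 + (n:ℝ)/((n:ℝ) - 1))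
          ≤ (∫ s in a..b, ginv (s ^ ((1:ℝ) - n))) ∧
      (∫ s in a..b, ginv (s ^ ((1:ℝ) - n)))
          ≤ c * ∫ t in (b ^ ((1:ℝ) - n))..(a ^ ((1:ℝ) - n)), Gc t / t ^ (1 + (n:ℝ)/((n:ℝ) - 1))) ∧
    (MeasureTheory.IntegrableOn (fun s : ℝ => ginv (s ^ ((1:ℝ) - n))) (Set.Ioc 0 1) ↔
      MeasureTheory.IntegrableOn (fun t : ℝ => Gc t / t ^ (1 + (n:ℝ)/((n:ℝ) - 1))) (Set.Ici 1)) := by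
  have hn' : (2:ℝ) ≤ (n:ℝ) := by exact_mod_cast hn
  set q : ℝ := (n:ℝ) - 1 with hq_def
  have hq : 0 < q := by rw [hq_def]; linarith
  set p : ℝ := (1:ℝ) - (n:ℝ) with hp_def
  have hp : p < 0 := by rw [hp_def]; linarith
  have hpq : p = -q := by rw [hp_def, hq_def]; ring
  set e : ℝ := 1 + (n:ℝ) / q with he_def
  have hiG0 : (0:ℝ) < iG := lt_trans one_pos h1
  set c1 : ℝ := 1 - 1 / iG with hc1_def
  have hc1 : 0 < c1 := by
    rw [hc1_def]
    have : 1 / iG < 1 := by rw [div_lt_one hiG0]; exact h1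
    linarith
  -- basic facts about g, ginv, Gc
  have hkey : ∀ t, 0 < t → iG * G t ≤ t * g t := by
    intro t ht
    exact (le_div_iff₀ (hGpos t ht)).1 (hbounds t ht).1
  have hgpos : ∀ t, 0 < t → 0 < g t := by
    intro t ht
    have h := hkey t ht
    have hG := hGpos t ht
    nlinarith
  have hginvpos : ∀ t, 0 < t → 0 < ginv t := fun t ht => (hinv t ht).1
  -- supporting line inequality via MVT
  have hsupp : ∀ y, 0 < y → ∀ u, 0 < u → G y + g y * (u - y) ≤ G u := by
    intro y hy u hu
    rcases lt_trichotomy y u with h | h | h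
    · obtain ⟨ξ, hξ, hξ'⟩ := exists_hasDerivAt_eq_slope G g h
        (fun x hx => ((hderiv x (lt_of_lt_of_le hy hx.1)).continuousAt).continuousWithinAt)
        (fun x hx => hderiv x (hy.trans hx.1))
      have hgy : g y < g ξ := hgmono (Set.mem_Ioi.2 hy) (Set.mem_Ioi.2 (hy.trans hξ.1)) hξ.1
      have huy : (0:ℝ) < u - y := sub_pos.2 h
      rw [eq_div_iff huy.ne'] at hξ'
      nlinarith
    · subst h; simp
    · obtain ⟨ξ, hξ, hξ'⟩ := exists_hasDerivAt_eq_slope G g h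
        (fun x hx => ((hderiv x (lt_of_lt_of_le hu hx.1)).continuousAt).continuousWithinAt)
        (fun x hx => hderiv x (hu.trans hx.1))
      have hgy : g ξ < g y := hgmono (Set.mem_Ioi.2 (hu.trans hξ.1)) (Set.mem_Ioi.2 hy) hξ.2
      have huy : (0:ℝ) < y - u := sub_pos.2 h
      rw [eq_div_iff huy.ne'] at hξ'
      nlinarith
  -- Young equality
  have hGcEq : ∀ t, 0 < t → Gc t = t * ginv t - G (ginv t) := by
    intro t ht
    obtain ⟨hy, hgy⟩ := hinv t ht
    have hub : ∀ z ∈ {z : ℝ | ∃ u, 0 < u ∧ z = t * u - G u}, z ≤ t * ginv t - G (ginv t) := by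
      rintro z ⟨u, hu, rfl⟩
      have h := hsupp (ginv t) hy u hu
      rw [hgy] at h
      linarith
    rw [hconj t]
    refine le_antisymm (csSup_le ⟨t * ginv t - G (ginv t), ⟨ginv t, hy, rfl⟩⟩ hub) ?_
    exact le_csSup ⟨_, hub⟩ ⟨ginv t, hy, rfl⟩
  have hle_Gc : ∀ t, 0 < t → ∀ u, 0 < u → t * u - G u ≤ Gc t := by
    intro t ht u hu
    obtain ⟨hy, hgy⟩ := hinv t ht
    have h := hsupp (ginv t) hy u hu
    rw [hgy] at h
    rw [hGcEq t ht]
    linarith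
  have hGcB : ∀ t, 0 < t → c1 * (t * ginv t) ≤ Gc t ∧ Gc t ≤ t * ginv t := by
    intro t ht
    obtain ⟨hy, hgy⟩ := hinv t ht
    have hGy := hGpos _ hy
    have hk := hkey _ hy
    rw [hgy] at hk
    rw [hGcEq t ht]
    constructor
    · have hinv1 : iG * (1 / iG) = 1 := mul_one_div_cancel hiG0.ne'
      have h3 : (1/iG) * (iG * G (ginv t)) ≤ (1/iG) * (ginv t * t) :=
        mul_le_mul_of_nonneg_left hk (by positivity)
      rw [hc1_def]
      nlinarith
    · linarith
  have hginvmono : MonotoneOn ginv (Set.Ioi 0) := by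
    intro t1 h1' t2 h2' hle
    by_contra hgt
    push_neg at hgt
    have h := hgmono (Set.mem_Ioi.2 (hginvpos _ h2')) (Set.mem_Ioi.2 (hginvpos _ h1')) hgt
    rw [(hinv t1 h1').2, (hinv t2 h2').2] at h
    exact absurd hle (not_le.2 h)
  have hGcMono : MonotoneOn Gc (Set.Ioi 0) := by
    intro t1 h1' t2 h2' hle
    rw [Set.mem_Ioi] at h1' h2'
    have hy := hginvpos t1 h1'
    calc Gc t1 = t1 * ginv t1 - G (ginv t1) := hGcEq t1 h1'
      _ ≤ t2 * ginv t1 - G (ginv t1) := by nlinarith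
      _ ≤ Gc t2 := hle_Gc t2 h2' _ hy
  -- rpow facts
  have hrpos : ∀ s : ℝ, 0 < s → 0 < s ^ p := fun s hs => Real.rpow_pos_of_pos hs p
  have hphi_anti : ∀ {s1 s2 : ℝ}, 0 < s1 → s1 ≤ s2 → s2 ^ p ≤ s1 ^ p :=
    fun h h' => Real.rpow_le_rpow_of_nonpos h h' hp.le
  have hinjOn : ∀ S : Set ℝ, S ⊆ Set.Ioi 0 → Set.InjOn (fun x : ℝ => x ^ p) S := by
    intro S hS x hx y hy hxy
    by_contra hne
    rcases lt_or_gt_of_ne hne with h | h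
    · exact (Real.rpow_lt_rpow_of_neg (hS hx) h hp).ne' hxy
    · exact (Real.rpow_lt_rpow_of_neg (hS hy) h hp).ne hxy
  -- the middle integrand
  have hkB : ∀ s : ℝ, 0 < s →
      c1 * ginv (s ^ p) ≤ Gc (s ^ p) * s ^ q ∧ Gc (s ^ p) * s ^ q ≤ ginv (s ^ p) := by
    intro s hs
    have ht := hrpos s hs
    obtain ⟨hB1, hB2⟩ := hGcB _ ht
    have hy := hginvpos _ ht
    have hsq : s ^ q = (s ^ p)⁻¹ := by
      rw [hpq, Real.rpow_neg hs.le, inv_inv]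
    rw [hsq, mul_comm (Gc (s ^ p)) _, ← div_eq_inv_mul]
    constructor
    · rw [le_div_iff₀ ht]; nlinarith
    · rw [div_le_iff₀ ht]; nlinarith
  -- antitonicity / measurability
  have hanti1 : AntitoneOn (fun s => ginv (s ^ p)) (Set.Ioi 0) := by
    intro s1 hs1 s2 hs2 hle
    exact hginvmono (Set.mem_Ioi.2 (hrpos _ (Set.mem_Ioi.1 hs2)))
      (Set.mem_Ioi.2 (hrpos _ (Set.mem_Ioi.1 hs1))) (hphi_anti (Set.mem_Ioi.1 hs1) hle)
  have hanti2 : AntitoneOn (fun s => Gc (s ^ p)) (Set.Ioi 0) := by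
    intro s1 hs1 s2 hs2 hle
    exact hGcMono (Set.mem_Ioi.2 (hrpos _ (Set.mem_Ioi.1 hs2)))
      (Set.mem_Ioi.2 (hrpos _ (Set.mem_Ioi.1 hs1))) (hphi_anti (Set.mem_Ioi.1 hs1) hle)
  have hmeasginv : ∀ S : Set ℝ, MeasurableSet S → S ⊆ Set.Ioi 0 →
      AEMeasurable (fun s => ginv (s ^ p)) (volume.restrict S) :=
    fun S hS hsub => aemeasurable_restrict_of_antitoneOn hS (hanti1.mono hsub)
  have hmeask : ∀ S : Set ℝ, MeasurableSet S → S ⊆ Set.Ioi 0 →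
      AEMeasurable (fun s => Gc (s ^ p) * s ^ q) (volume.restrict S) := by
    intro S hS hsub
    exact (aemeasurable_restrict_of_antitoneOn hS (hanti2.mono hsub)).mul
      ((Real.continuous_rpow_const hq.le).measurable.aemeasurable)
  -- change of variables integrand identity
  have hcov_fun : ∀ s : ℝ, 0 < s →
      |p * s ^ (p - 1)| * (Gc (s ^ p) / (s ^ p) ^ e) = q * (Gc (s ^ p) * s ^ q) := by
    intro s hs
    have habs : |p * s ^ (p - 1)| = q * s ^ (p - 1) := by
      rw [abs_mul, abs_of_neg hp, abs_of_pos (Real.rpow_pos_of_pos hs _), hpq, neg_neg]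
    have h1 : (s ^ p) ^ e = s ^ (p * e) := (Real.rpow_mul hs.le p e).symm
    have hexp : s ^ (p - 1) * s ^ (-(p * e)) = s ^ q := by
      rw [← Real.rpow_add hs]
      congr 1
      rw [hp_def, hq_def, he_def, hq_def]
      have hne : (n:ℝ) - 1 ≠ 0 := by linarith
      field_simp
      ring
    rw [habs, h1, div_eq_mul_inv, ← Real.rpow_neg hs.le (p * e)]
    calc q * s ^ (p - 1) * (Gc (s ^ p) * s ^ (-(p * e)))
        = q * (Gc (s ^ p) * (s ^ (p - 1) * s ^ (-(p * e)))) := by ring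
      _ = q * (Gc (s ^ p) * s ^ q) := by rw [hexp]
  constructor
  · -- comparability
    refine ⟨q + (q * c1)⁻¹, by positivity, fun a b ha hab => ?_⟩
    have hb : 0 < b := ha.trans hab
    have hsub : Set.Ioc a b ⊆ Set.Ioi 0 := fun x hx => lt_trans ha hx.1
    have hsub' : Set.Ioo a b ⊆ Set.Ioi 0 := fun x hx => lt_trans ha hx.1
    have hba : b ^ p < a ^ p := Real.rpow_lt_rpow_of_neg ha hab hp
    -- change of variables
    have hJ : (∫ t in (b ^ p)..(a ^ p), Gc t / t ^ e)
        = q * ∫ s in Set.Ioc a b, Gc (s ^ p) * s ^ q := by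
      rw [intervalIntegral.integral_of_le hba.le, MeasureTheory.integral_Ioc_eq_integral_Ioo,
        ← rpow_neg_image_Ioo hp ha hab,
        integral_image_eq_integral_abs_deriv_smul measurableSet_Ioo
          (fun x hx => (Real.hasDerivAt_rpow_const
            (Or.inl (ne_of_gt (lt_trans ha hx.1)))).hasDerivWithinAt)
          (hinjOn _ hsub') (fun t => Gc t / t ^ e)]
      rw [setIntegral_congr_fun measurableSet_Ioo
        (fun s hs => by simp only [smul_eq_mul]; exact hcov_fun s (lt_trans ha hs.1)),
        MeasureTheory.integral_const_mul, ← MeasureTheory.integral_Ioc_eq_integral_Ioo]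
    -- integrability
    have hIginv : IntegrableOn (fun s => ginv (s ^ p)) (Set.Ioc a b) := by
      refine Integrable.mono' (g := fun _ => ginv (a ^ p))
        (integrableOn_const measure_Ioc_lt_top.ne)
        ((hmeasginv _ measurableSet_Ioc hsub).aestronglyMeasurable) ?_
      filter_upwards [ae_restrict_mem measurableSet_Ioc] with s hs
      have hs0 : 0 < s := lt_trans ha hs.1
      rw [Real.norm_eq_abs, abs_of_pos (hginvpos _ (hrpos s hs0))]
      exact hanti1 (Set.mem_Ioi.2 ha) (Set.mem_Ioi.2 hs0) hs.1.le
    have hIk : IntegrableOn (fun s => Gc (s ^ p) * s ^ q) (Set.Ioc a b) := by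
      refine Integrable.mono' hIginv
        ((hmeask _ measurableSet_Ioc hsub).aestronglyMeasurable) ?_
      filter_upwards [ae_restrict_mem measurableSet_Ioc] with s hs
      have hs0 : 0 < s := lt_trans ha hs.1
      obtain ⟨hb1, hb2⟩ := hkB s hs0
      have hnn : 0 ≤ Gc (s ^ p) * s ^ q :=
        le_trans (mul_nonneg hc1.le (hginvpos _ (hrpos s hs0)).le) hb1
      rw [Real.norm_eq_abs, abs_of_nonneg hnn]
      exact hb2
    have hI0 : 0 ≤ ∫ s in Set.Ioc a b, ginv (s ^ p) :=
      setIntegral_nonneg measurableSet_Ioc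
        (fun s hs => (hginvpos _ (hrpos s (lt_trans ha hs.1))).le)
    have hK0 : 0 ≤ ∫ s in Set.Ioc a b, Gc (s ^ p) * s ^ q :=
      setIntegral_nonneg measurableSet_Ioc (fun s hs =>
        le_trans (mul_nonneg hc1.le (hginvpos _ (hrpos s (lt_trans ha hs.1))).le)
          (hkB s (lt_trans ha hs.1)).1)
    have hKle : (∫ s in Set.Ioc a b, Gc (s ^ p) * s ^ q) ≤ ∫ s in Set.Ioc a b, ginv (s ^ p) :=
      setIntegral_mono_on hIk hIginv measurableSet_Ioc
        (fun s hs => (hkB s (lt_trans ha hs.1)).2)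
    have hleK : c1 * (∫ s in Set.Ioc a b, ginv (s ^ p)) ≤ ∫ s in Set.Ioc a b, Gc (s ^ p) * s ^ q := by
      rw [← MeasureTheory.integral_const_mul]
      exact setIntegral_mono_on (hIginv.const_mul c1) hIk measurableSet_Ioc
        (fun s hs => (hkB s (lt_trans ha hs.1)).1)
    have hIeq : (∫ s in a..b, ginv (s ^ p)) = ∫ s in Set.Ioc a b, ginv (s ^ p) :=
      intervalIntegral.integral_of_le hab.le
    rw [hIeq, hJ]
    exact comparison_arith hq hc1 hI0 hleK hKle
  · -- integrability equivalence
    have hsub : Set.Ioo (0:ℝ) 1 ⊆ Set.Ioi 0 := fun x hx => hx.1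
    rw [integrableOn_Ioc_iff_integrableOn_Ioo, integrableOn_Ici_iff_integrableOn_Ioi,
      ← rpow_neg_image_Ioo01 hp,
      integrableOn_image_iff_integrableOn_abs_deriv_smul measurableSet_Ioo
        (fun x hx => (Real.hasDerivAt_rpow_const (Or.inl (ne_of_gt hx.1))).hasDerivWithinAt)
        (hinjOn _ hsub) (fun t => Gc t / t ^ e),
      integrableOn_congr_fun
        (f := fun x : ℝ => |p * x ^ (p - 1)| • (Gc (x ^ p) / (x ^ p) ^ e))
        (g := fun s : ℝ => q * (Gc (s ^ p) * s ^ q))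
        (fun s hs => by simp only [smul_eq_mul]; exact hcov_fun s hs.1) measurableSet_Ioo]
    rw [show (fun s : ℝ => q * (Gc (s ^ p) * s ^ q))
        = q • (fun s : ℝ => Gc (s ^ p) * s ^ q) from rfl]
    rw [show (MeasureTheory.IntegrableOn (q • fun s : ℝ => Gc (s ^ p) * s ^ q) (Set.Ioo 0 1) volume)
        = MeasureTheory.Integrable (q • fun s : ℝ => Gc (s ^ p) * s ^ q)
            (MeasureTheory.volume.restrict (Set.Ioo 0 1)) from rfl,
      integrable_smul_iff hq.ne']
    constructor
    · intro hg_int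
      refine Integrable.mono' hg_int
        ((hmeask _ measurableSet_Ioo hsub).aestronglyMeasurable) ?_
      filter_upwards [ae_restrict_mem measurableSet_Ioo] with s hs
      have hs0 : 0 < s := hs.1
      obtain ⟨hb1, hb2⟩ := hkB s hs0
      have hnn : 0 ≤ Gc (s ^ p) * s ^ q :=
        le_trans (mul_nonneg hc1.le (hginvpos _ (hrpos s hs0)).le) hb1
      rw [Real.norm_eq_abs, abs_of_nonneg hnn]
      exact hb2
    · intro hk_int
      refine Integrable.mono' (hk_int.const_mul c1⁻¹)
        ((hmeasginv _ measurableSet_Ioo hsub).aestronglyMeasurable) ?_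
      filter_upwards [ae_restrict_mem measurableSet_Ioo] with s hs
      have hs0 : 0 < s := hs.1
      obtain ⟨hb1, _⟩ := hkB s hs0
      rw [Real.norm_eq_abs, abs_of_pos (hginvpos _ (hrpos s hs0))]
      have h9 : c1⁻¹ * (c1 * ginv (s ^ p)) = ginv (s ^ p) := by
        rw [← mul_assoc, inv_mul_cancel₀ hc1.ne', one_mul]
      linarith [mul_le_mul_of_nonneg_left hb1 (inv_nonneg.2 hc1.le)]
end

section
/- Let 1 < p < n, α ∈ ℝ, and g(s) = s^{p−1} log^α(e + s). Then g⁻¹(λ) ≃ λ^{1/(p−1)} log^{−α/(p−1)}(e + λ) for λ > 0, with comparison constants depending only on p, α, and n. Consequently ∫_r^{2r} g⁻¹(s^{1−n}) ds ≃ r^{−(n−p)/(p−1)} log^{−α/(p−1)}(e + 1/r) for 0 < r < 1. -/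
open Real Set

private lemma two_le_E : (2:ℝ) ≤ Real.exp 1 := by
  have := Real.add_one_le_exp 1; linarith

private lemma one_le_L {x : ℝ} (hx : 0 ≤ x) : 1 ≤ Real.log (Real.exp 1 + x) := by
  have h1 : Real.exp 1 ≤ Real.exp 1 + x := by linarith
  calc (1:ℝ) = Real.log (Real.exp 1) := (Real.log_exp 1).symm
    _ ≤ _ := Real.log_le_log (Real.exp_pos 1) h1

/-- Core log-comparison lemma: if `x ≤ (e+y)^m` with `m ≥ 1` then
`log(e+x) ≤ (m+1) log(e+y)`. -/
private lemma log_comp {x y m : ℝ} (hx : 0 ≤ x) (hy : 0 ≤ y) (hm : 1 ≤ m)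
    (h : x ≤ (Real.exp 1 + y) ^ m) :
    Real.log (Real.exp 1 + x) ≤ (m + 1) * Real.log (Real.exp 1 + y) := by
  have h2 : (2:ℝ) ≤ Real.exp 1 := two_le_E
  set E := Real.exp 1 with hEdef
  have hEy : 0 < E + y := by linarith
  have h1 : E ≤ (E + y) ^ m := by
    calc E = (E + y) ^ (1:ℝ) - y := by rw [Real.rpow_one]; ring
      _ ≤ (E + y) ^ m := by
          have := Real.rpow_le_rpow_of_exponent_le (by linarith : (1:ℝ) ≤ E + y) hm
          linarith
  have hkey : E + x ≤ (E + y) ^ (m + 1) := by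
    have hm0 : 0 < (E + y) ^ m := Real.rpow_pos_of_pos hEy m
    calc E + x ≤ (E + y) ^ m + (E + y) ^ m := add_le_add h1 h
      _ = 2 * (E + y) ^ m := by ring
      _ ≤ (E + y) * (E + y) ^ m := by nlinarith
      _ = (E + y) ^ (m + 1) := by rw [Real.rpow_add_one (ne_of_gt hEy)]; ring
  calc Real.log (E + x) ≤ Real.log ((E + y) ^ (m + 1)) :=
        Real.log_le_log (by linarith) hkey
    _ = (m + 1) * Real.log (E + y) := Real.log_rpow hEy _

/-- If `v` is within factor `R` of `u`, then `v^γ` is within factor `R^|γ|` of `u^γ`. -/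
private lemma rpow_ratio {R u v γ : ℝ} (hR : 1 ≤ R) (hu : 0 < u) (hv : 0 < v)
    (h1 : u / R ≤ v) (h2 : v ≤ R * u) :
    R ^ (-|γ|) * u ^ γ ≤ v ^ γ ∧ v ^ γ ≤ R ^ |γ| * u ^ γ := by
  have hR0 : (0:ℝ) < R := by linarith
  rcases le_or_gt 0 γ with hg | hg
  · have habs : |γ| = γ := abs_of_nonneg hg
    constructor
    · calc R ^ (-|γ|) * u ^ γ = (u / R) ^ γ := by
            rw [habs, Real.div_rpow hu.le hR0.le, Real.rpow_neg hR0.le]; ring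
        _ ≤ v ^ γ := Real.rpow_le_rpow (by positivity) h1 hg
    · calc v ^ γ ≤ (R * u) ^ γ := Real.rpow_le_rpow hv.le h2 hg
        _ = R ^ |γ| * u ^ γ := by rw [habs, Real.mul_rpow hR0.le hu.le]
  · have habs : |γ| = -γ := abs_of_neg hg
    constructor
    · calc R ^ (-|γ|) * u ^ γ = (R * u) ^ γ := by
            rw [habs, neg_neg, Real.mul_rpow hR0.le hu.le]
        _ ≤ v ^ γ := Real.rpow_le_rpow_of_nonpos hv h2 hg.le
    · calc v ^ γ ≤ (u / R) ^ γ :=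
            Real.rpow_le_rpow_of_nonpos (by positivity) h1 hg.le
        _ = R ^ |γ| * u ^ γ := by
            rw [habs, Real.div_rpow hu.le hR0.le, Real.rpow_neg hR0.le]; ring

private lemma log_le_rpow_div {x δ : ℝ} (hx : 1 ≤ x) (hδ : 0 < δ) :
    Real.log x ≤ x ^ δ / δ := by
  have h1 : Real.log (x ^ δ) ≤ x ^ δ - 1 :=
    Real.log_le_sub_one_of_pos (by positivity)
  rw [Real.log_rpow (by linarith)] at h1
  have h2 : δ * Real.log x ≤ x ^ δ := by linarith
  rw [div_eq_inv_mul, ← mul_le_mul_iff_right₀ hδ]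
  calc δ * Real.log x ≤ x ^ δ := h2
    _ = δ * (δ⁻¹ * x ^ δ) := by field_simp

/-- scaling the argument by `K ≥ 1` changes `log(e+·)` by at most factor `2+log K`. -/
private lemma log_scale {K t : ℝ} (hK : 1 ≤ K) (ht : 0 ≤ t) :
    Real.log (Real.exp 1 + K * t) ≤ (2 + Real.log K) * Real.log (Real.exp 1 + t) := by
  have hlK : 0 ≤ Real.log K := Real.log_nonneg hK
  have h2 : (2:ℝ) ≤ Real.exp 1 := two_le_E
  have hEt : (1:ℝ) ≤ Real.exp 1 + t := by linarith
  have hKb : K ≤ (Real.exp 1 + t) ^ Real.log K := by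
    calc K = Real.exp 1 ^ Real.log K := by
          rw [Real.exp_one_rpow, Real.exp_log (by linarith)]
      _ ≤ (Real.exp 1 + t) ^ Real.log K :=
          Real.rpow_le_rpow (Real.exp_pos 1).le (by linarith) hlK
  have hkey : K * t ≤ (Real.exp 1 + t) ^ (Real.log K + 1) := by
    calc K * t ≤ (Real.exp 1 + t) ^ Real.log K * (Real.exp 1 + t) := by
          apply mul_le_mul hKb (by linarith) ht (by positivity)
      _ = (Real.exp 1 + t) ^ (Real.log K + 1) := by
          rw [Real.rpow_add_one (by positivity)]
  have := log_comp (by positivity) ht (by linarith) hkey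
  calc Real.log (Real.exp 1 + K * t) ≤ (Real.log K + 1 + 1) * Real.log (Real.exp 1 + t) := this
    _ = (2 + Real.log K) * Real.log (Real.exp 1 + t) := by ring

set_option maxHeartbeats 1000000 in
private lemma hfun_log_bounds (p α : ℝ) (hp1 : 1 < p) :
    ∃ M : ℝ, 1 ≤ M ∧ ∀ lam : ℝ, 0 < lam →
      Real.log (Real.exp 1 + lam) / M
        ≤ Real.log (Real.exp 1 +
            lam ^ ((1:ℝ)/(p-1)) * Real.log (Real.exp 1 + lam) ^ (-α/(p-1)))
      ∧ Real.log (Real.exp 1 +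
            lam ^ ((1:ℝ)/(p-1)) * Real.log (Real.exp 1 + lam) ^ (-α/(p-1)))
        ≤ M * Real.log (Real.exp 1 + lam) := by
  have h2E : (2:ℝ) ≤ Real.exp 1 := two_le_E
  set E := Real.exp 1 with hEdef
  set β := p - 1 with hbdef
  have hβ : 0 < β := by simp only [hbdef]; linarith
  set a := |α| with hadef
  have ha : 0 ≤ a := abs_nonneg α
  set δ := 1 / (2*(a+1)) with hddef
  have hδ : 0 < δ := by positivity
  set Ca := (2*(a+1)) ^ a with hCadef
  have hCa0 : 0 < Ca := Real.rpow_pos_of_pos (by linarith) a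
  have hCa1 : 1 ≤ Ca := Real.one_le_rpow (by linarith) ha
  set m₁ := max 1 ((1+a)/β) with hm₁def
  have hm₁1 : 1 ≤ m₁ := le_max_left _ _
  set m₂ := 2 * max β 1 + 2 * Real.log (1 + Ca) with hm₂def
  have hlCa : 0 ≤ Real.log (1 + Ca) := Real.log_nonneg (by linarith)
  have hm₂1 : 1 ≤ m₂ := by
    have : (1:ℝ) ≤ max β 1 := le_max_right _ _
    simp only [hm₂def]; linarith
  refine ⟨max (m₁ + 1) (m₂ + 1), by
    have := le_max_left (m₁+1) (m₂+1); linarith, ?_⟩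
  set M := max (m₁ + 1) (m₂ + 1) with hMdef
  have hM2 : 2 ≤ M := by
    have := le_max_left (m₁+1) (m₂+1); linarith
  intro lam hlam
  set L := Real.log (E + lam) with hLdef
  have hL1 : 1 ≤ L := one_le_L hlam.le
  have hLE : L ≤ E + lam := by
    have := Real.log_le_sub_one_of_pos (show (0:ℝ) < E + lam by linarith)
    simp only [hLdef]; linarith
  set H := lam ^ ((1:ℝ)/β) * L ^ (-α/β) with hHdef
  have hH0 : 0 < H := by
    apply mul_pos (Real.rpow_pos_of_pos hlam _) (Real.rpow_pos_of_pos (by linarith) _)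
  have hEl1 : (1:ℝ) ≤ E + lam := by linarith
  -- upper bound: H ≤ (E+lam)^m₁
  have hup : H ≤ (E + lam) ^ m₁ := by
    have h1 : lam ^ ((1:ℝ)/β) ≤ (E + lam) ^ ((1:ℝ)/β) :=
      Real.rpow_le_rpow hlam.le (by linarith) (by positivity)
    have h2 : L ^ (-α/β) ≤ L ^ (a/β) := by
      apply Real.rpow_le_rpow_of_exponent_le hL1
      have h : -α ≤ a := neg_le_abs α
      gcongr
    have h3 : L ^ (a/β) ≤ (E + lam) ^ (a/β) :=
      Real.rpow_le_rpow (by linarith) hLE (by positivity)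
    calc H ≤ (E + lam) ^ ((1:ℝ)/β) * (E + lam) ^ (a/β) := by
          apply mul_le_mul h1 (h2.trans h3) (by positivity) (by positivity)
      _ = (E + lam) ^ ((1:ℝ)/β + a/β) := (Real.rpow_add (by linarith) _ _).symm
      _ ≤ (E + lam) ^ m₁ := by
          apply Real.rpow_le_rpow_of_exponent_le hEl1
          have heq : (1:ℝ)/β + a/β = (1+a)/β := by ring
          rw [heq]; exact le_max_right _ _
  have hupper : Real.log (E + H) ≤ M * L := by
    have := log_comp hH0.le hlam.le hm₁1 hup
    have hLnn : 0 ≤ L := by linarith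
    have hm1M : m₁ + 1 ≤ M := le_max_left _ _
    calc Real.log (E + H) ≤ (m₁ + 1) * L := this
      _ ≤ M * L := by nlinarith
  -- lower bound: lam ≤ (E+H)^m₂
  have hEH1 : (1:ℝ) ≤ E + H := by linarith
  have hlow : lam ≤ (E + H) ^ m₂ := by
    -- step i : lam ≤ H^β * L^a
    have hstep1 : lam ≤ H ^ β * L ^ a := by
      have hmono : lam ^ ((1:ℝ)/β) * L ^ (-a/β) ≤ H := by
        apply mul_le_mul_of_nonneg_left ?_ (by positivity)
        apply Real.rpow_le_rpow_of_exponent_le hL1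
        have h : -a ≤ -α := neg_le_neg (le_abs_self α)
        gcongr
      have hcalc : (lam ^ ((1:ℝ)/β) * L ^ (-a/β)) ^ β = lam * L ^ (-a) := by
        rw [Real.mul_rpow (by positivity) (by positivity),
            ← Real.rpow_mul hlam.le, ← Real.rpow_mul (by linarith : (0:ℝ) ≤ L)]
        rw [show (1:ℝ)/β * β = 1 by field_simp, show -a/β * β = -a by field_simp,
            Real.rpow_one]
      have hHb : lam * L ^ (-a) ≤ H ^ β := by
        rw [← hcalc]
        exact Real.rpow_le_rpow (by positivity) hmono hβ.le
      have hcancel : L ^ (-a) * L ^ a = 1 := by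
        rw [← Real.rpow_add (by linarith)]; simp
      have hLa : 0 < L ^ a := Real.rpow_pos_of_pos (by linarith) a
      calc lam = lam * L ^ (-a) * L ^ a := by rw [mul_assoc, hcancel, mul_one]
        _ ≤ H ^ β * L ^ a := by
            apply mul_le_mul_of_nonneg_right hHb hLa.le
    -- step ii : L^a ≤ Ca * (E+lam)^(1/2)
    have hstep2 : L ^ a ≤ Ca * (E + lam) ^ ((1:ℝ)/2) := by
      have hld : L ≤ (E + lam) ^ δ / δ := log_le_rpow_div hEl1 hδ
      have h4 : L ^ a ≤ ((E + lam) ^ δ / δ) ^ a :=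
        Real.rpow_le_rpow (by linarith) hld ha
      have h5 : ((E + lam) ^ δ / δ) ^ a = (E + lam) ^ (δ * a) / δ ^ a := by
        rw [Real.div_rpow (by positivity) hδ.le, ← Real.rpow_mul (by linarith)]
      have h6 : (E + lam) ^ (δ * a) ≤ (E + lam) ^ ((1:ℝ)/2) := by
        apply Real.rpow_le_rpow_of_exponent_le hEl1
        rw [hddef]
        rw [div_mul_eq_mul_div, one_mul, div_le_div_iff₀ (by linarith) (by norm_num)]
        linarith
      have h7 : δ ^ a = Ca⁻¹ := by
        rw [hddef, hCadef, one_div, Real.inv_rpow (by linarith : (0:ℝ) ≤ 2*(a+1))]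
      calc L ^ a ≤ (E + lam) ^ (δ * a) / δ ^ a := by rw [← h5]; exact h4
        _ ≤ (E + lam) ^ ((1:ℝ)/2) / δ ^ a := by gcongr
        _ = Ca * (E + lam) ^ ((1:ℝ)/2) := by rw [h7, div_eq_mul_inv, inv_inv, mul_comm]
    -- step iii
    set B := (E + H) ^ max β 1 with hBdef
    have hB2 : 2 ≤ B := by
      calc (2:ℝ) ≤ E + H := by linarith
        _ = (E + H) ^ (1:ℝ) := (Real.rpow_one _).symm
        _ ≤ B := Real.rpow_le_rpow_of_exponent_le hEH1 (le_max_right _ _)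
    have hHbB : (E + H) ^ β ≤ B :=
      Real.rpow_le_rpow_of_exponent_le hEH1 (le_max_left _ _)
    have hBE : E ≤ B := by
      calc E ≤ (E + H) ^ (1:ℝ) := by rw [Real.rpow_one]; linarith
        _ ≤ B := Real.rpow_le_rpow_of_exponent_le hEH1 (le_max_right _ _)
    set X := E + lam with hXdef
    have hX1 : 1 ≤ X := hEl1
    set Y := X ^ ((1:ℝ)/2) with hYdef
    have hY1 : 1 ≤ Y := Real.one_le_rpow hX1 (by norm_num)
    have hYY : Y * Y = X := by
      rw [hYdef, ← Real.rpow_add (by linarith)]; norm_num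
    have hHB : H ^ β ≤ B := by
      calc H ^ β ≤ (E + H) ^ β := Real.rpow_le_rpow hH0.le (by linarith) hβ.le
        _ ≤ B := hHbB
    have hXb : X ≤ (1 + Ca) * B * Y := by
      have hl : lam ≤ B * (Ca * Y) := by
        calc lam ≤ H ^ β * L ^ a := hstep1
          _ ≤ B * (Ca * Y) := by
              apply mul_le_mul hHB hstep2 (by positivity) (by linarith)
      have hE' : E ≤ Y * B := hBE.trans (le_mul_of_one_le_left (by linarith) hY1)
      calc X = E + lam := rfl
        _ ≤ Y * B + B * (Ca * Y) := add_le_add hE' hl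
        _ = (1 + Ca) * B * Y := by ring
    have hYle : Y ≤ (1 + Ca) * B := by
      have h8 : Y * Y ≤ (1 + Ca) * B * Y := by rw [hYY]; exact hXb
      have hY0 : 0 < Y := by linarith
      exact le_of_mul_le_mul_right (by linarith [h8]) hY0
    have hXfin : X ≤ ((1 + Ca) * B) * ((1 + Ca) * B) := by
      calc X = Y * Y := hYY.symm
        _ ≤ ((1 + Ca) * B) * ((1 + Ca) * B) :=
            mul_le_mul hYle hYle (by linarith) (mul_nonneg (by linarith) (by linarith))
    have hCaB : 1 + Ca ≤ (E + H) ^ Real.log (1 + Ca) := by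
      calc 1 + Ca = E ^ Real.log (1 + Ca) := by
            rw [Real.exp_one_rpow, Real.exp_log (by linarith)]
        _ ≤ (E + H) ^ Real.log (1 + Ca) :=
            Real.rpow_le_rpow (Real.exp_pos 1).le (by linarith) hlCa
    calc lam ≤ X := by simp only [hXdef]; linarith
      _ ≤ ((1 + Ca) * B) * ((1 + Ca) * B) := hXfin
      _ ≤ ((E + H) ^ Real.log (1 + Ca) * B) * ((E + H) ^ Real.log (1 + Ca) * B) := by
          have hB0 : 0 ≤ B := by linarith
          have h9 : (1 + Ca) * B ≤ (E + H) ^ Real.log (1 + Ca) * B :=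
            mul_le_mul_of_nonneg_right hCaB hB0
          have h10 : 0 ≤ (1 + Ca) * B := mul_nonneg (by linarith) hB0
          exact mul_le_mul h9 h9 h10 (by positivity)
      _ = (E + H) ^ m₂ := by
          have hEH0 : (0:ℝ) < E + H := by linarith
          rw [hBdef, hm₂def, ← Real.rpow_add hEH0, ← Real.rpow_add hEH0]
          congr 1
          ring
  have hlower : L / M ≤ Real.log (E + H) := by
    have := log_comp hlam.le hH0.le hm₂1 hlow
    have hm2M : m₂ + 1 ≤ M := le_max_right _ _
    have hlogEH : 1 ≤ Real.log (E + H) := one_le_L hH0.le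
    rw [div_le_iff₀ (by linarith : (0:ℝ) < M)]
    calc L ≤ (m₂ + 1) * Real.log (E + H) := this
      _ ≤ M * Real.log (E + H) := by nlinarith
      _ = Real.log (E + H) * M := by ring
  exact ⟨hlower, hupper⟩

private lemma exists_K (β a M : ℝ) (hβ : 0 < β) (ha : 0 ≤ a) (hM : 1 ≤ M) :
    ∃ K : ℝ, 1 ≤ K ∧ ((2 + Real.log K) * M) ^ a ≤ K ^ β := by
  set δ := β / (2*(a+1)) with hddef
  have hδ : 0 < δ := by positivity
  set D := ((2 + 1/δ) * M) ^ a with hDdef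
  have hbase1 : (1:ℝ) ≤ (2 + 1/δ) * M := by
    have h1 : (0:ℝ) < 1/δ := by positivity
    nlinarith
  have hD1 : 1 ≤ D := Real.one_le_rpow hbase1 ha
  refine ⟨max 1 (D ^ ((2:ℝ)/β)), le_max_left _ _, ?_⟩
  set K := max 1 (D ^ ((2:ℝ)/β)) with hKdef
  have hK1 : 1 ≤ K := le_max_left _ _
  have hK0 : (0:ℝ) < K := by linarith
  have hlogK : 0 ≤ Real.log K := Real.log_nonneg hK1
  have hKd1 : 1 ≤ K ^ δ := Real.one_le_rpow hK1 hδ.le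
  have hlog : Real.log K ≤ K ^ δ / δ := log_le_rpow_div hK1 hδ
  have hstep : 2 + Real.log K ≤ (2 + 1/δ) * K ^ δ := by
    have h2 : Real.log K ≤ (1/δ) * K ^ δ := by
      rw [one_div, inv_mul_eq_div]; exact hlog
    nlinarith
  have hmain : ((2 + Real.log K) * M) ^ a ≤ D * K ^ (δ * a) := by
    have h3 : (2 + Real.log K) * M ≤ (2 + 1/δ) * M * K ^ δ := by
      have : (2 + Real.log K) * M ≤ (2 + 1/δ) * K ^ δ * M :=
        mul_le_mul_of_nonneg_right hstep (by linarith)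
      linarith [this]
    calc ((2 + Real.log K) * M) ^ a ≤ ((2 + 1/δ) * M * K ^ δ) ^ a := by
          apply Real.rpow_le_rpow ?_ h3 ha
          · have : (0:ℝ) ≤ 2 + Real.log K := by linarith
            nlinarith
      _ = D * K ^ (δ * a) := by
          rw [Real.mul_rpow (by linarith) (by positivity), hDdef,
              ← Real.rpow_mul hK0.le]
  have hexp : K ^ (δ * a) ≤ K ^ (β/2) := by
    apply Real.rpow_le_rpow_of_exponent_le hK1
    rw [hddef]
    rw [div_mul_eq_mul_div, div_le_div_iff₀ (by positivity) (by norm_num)]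
    nlinarith
  have hDK : D ≤ K ^ (β/2) := by
    have h4 : D ^ ((2:ℝ)/β) ≤ K := le_max_right _ _
    have h5 : (D ^ ((2:ℝ)/β)) ^ (β/2) ≤ K ^ (β/2) :=
      Real.rpow_le_rpow (by positivity) h4 (by positivity)
    calc D = D ^ (((2:ℝ)/β) * (β/2)) := by
          rw [show ((2:ℝ)/β) * (β/2) = 1 by field_simp, Real.rpow_one]
      _ = (D ^ ((2:ℝ)/β)) ^ (β/2) := Real.rpow_mul (by linarith) _ _
      _ ≤ K ^ (β/2) := h5
  calc ((2 + Real.log K) * M) ^ a ≤ D * K ^ (δ * a) := hmain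
    _ ≤ K ^ (β/2) * K ^ (β/2) := by
        apply mul_le_mul hDK hexp (by positivity) (by positivity)
    _ = K ^ β := by rw [← Real.rpow_add hK0]; norm_num

set_option maxHeartbeats 1000000 in
private lemma inv_bounds (p α : ℝ) (hp1 : 1 < p)
    (g ginv : ℝ → ℝ)
    (hg : ∀ s, 0 < s → g s = s ^ (p - 1) * (Real.log (Real.exp 1 + s)) ^ α)
    (hgmono : StrictMonoOn g (Set.Ioi 0))
    (hinv : ∀ t, 0 < t → 0 < ginv t ∧ g (ginv t) = t) :
    ∃ K : ℝ, 1 ≤ K ∧ ∀ lam : ℝ, 0 < lam →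
      K⁻¹ * (lam ^ ((1:ℝ)/(p - 1)) * (Real.log (Real.exp 1 + lam)) ^ (-α/(p - 1)))
        ≤ ginv lam ∧
      ginv lam ≤ K * (lam ^ ((1:ℝ)/(p - 1)) * (Real.log (Real.exp 1 + lam)) ^ (-α/(p - 1))) := by
  have h2E : (2:ℝ) ≤ Real.exp 1 := two_le_E
  set E := Real.exp 1 with hEdef
  set β := p - 1 with hbdef
  have hβ : 0 < β := by simp only [hbdef]; linarith
  set a := |α| with hadef
  have ha : 0 ≤ a := abs_nonneg α
  obtain ⟨M, hM1, hMb⟩ := hfun_log_bounds p α hp1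
  obtain ⟨K, hK1, hKb⟩ := exists_K β a M hβ ha hM1
  have hK0 : (0:ℝ) < K := by linarith
  have hlogK : 0 ≤ Real.log K := Real.log_nonneg hK1
  set R := (2 + Real.log K) * M with hRdef
  have hR1 : 1 ≤ R := by nlinarith
  have hR0 : (0:ℝ) < R := by linarith
  have hRa0 : (0:ℝ) < R ^ a := Real.rpow_pos_of_pos hR0 a
  have hKβ0 : (0:ℝ) < K ^ β := Real.rpow_pos_of_pos hK0 β
  have hKR : 1 ≤ K ^ β * (R ^ a)⁻¹ := by
    rw [← div_eq_mul_inv]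
    exact (one_le_div hRa0).mpr hKb
  refine ⟨K, hK1, ?_⟩
  intro lam hlam
  set L := Real.log (E + lam) with hLdef
  have hL1 : 1 ≤ L := one_le_L hlam.le
  have hL0 : (0:ℝ) < L := by linarith
  set Hl := lam ^ ((1:ℝ)/β) * L ^ (-α/β) with hHdef
  have hH0 : 0 < Hl :=
    mul_pos (Real.rpow_pos_of_pos hlam _) (Real.rpow_pos_of_pos hL0 _)
  obtain ⟨hlo, hhi⟩ := hMb lam hlam
  -- `hlo : L / M ≤ log (E + Hl)`, `hhi : log (E + Hl) ≤ M * L`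
  have hLH1 : 1 ≤ Real.log (E + Hl) := one_le_L hH0.le
  have hHβ : Hl ^ β = lam * L ^ (-α) := by
    rw [hHdef, Real.mul_rpow (by positivity) (by positivity),
        ← Real.rpow_mul hlam.le, ← Real.rpow_mul hL0.le,
        show (1:ℝ)/β * β = 1 by field_simp, show -α/β * β = -α by field_simp,
        Real.rpow_one]
  have hLcancel : L ^ (-α) * L ^ α = 1 := by
    rw [← Real.rpow_add hL0]; simp
  have hLα0 : (0:ℝ) < L ^ α := Real.rpow_pos_of_pos hL0 α
  have hginv := hinv lam hlam
  -- upper bound : ginv lam ≤ K * Hl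
  have hub : ginv lam ≤ K * Hl := by
    set v := Real.log (E + K * Hl) with hvdef
    have hv1 : 1 ≤ v := one_le_L (by positivity)
    have hv0 : (0:ℝ) < v := by linarith
    have h1 : L / R ≤ v := by
      have e1 : L / R ≤ L / M := by
        apply div_le_div_of_nonneg_left hL0.le (by linarith) ?_
        · nlinarith
      have e2 : Real.log (E + Hl) ≤ v := by
        apply Real.log_le_log (by positivity)
        have : Hl ≤ K * Hl := le_mul_of_one_le_left hH0.le hK1
        linarith
      linarith
    have h2 : v ≤ R * L := by
      have e3 : v ≤ (2 + Real.log K) * Real.log (E + Hl) := log_scale hK1 hH0.le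
      have e4 : (2 + Real.log K) * Real.log (E + Hl) ≤ (2 + Real.log K) * (M * L) := by
        apply mul_le_mul_of_nonneg_left hhi (by linarith)
      calc v ≤ (2 + Real.log K) * (M * L) := e3.trans e4
        _ = R * L := by rw [hRdef]; ring
    have hratio := (rpow_ratio (γ := α) hR1 hL0 hv0 h1 h2).1
    -- `R ^ (-|α|) * L ^ α ≤ v ^ α`
    have hgKH : lam ≤ g (K * Hl) := by
      have hgeq : g (K * Hl) = K ^ β * (lam * L ^ (-α)) * v ^ α := by
        rw [hg (K * Hl) (by positivity), Real.mul_rpow hK0.le hH0.le, hHβ, hvdef]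
        try ring
      have hvα : R ^ (-a) * L ^ α ≤ v ^ α := by
        rw [hadef]; exact hratio
      have hfactor : (0:ℝ) < K ^ β * (lam * L ^ (-α)) := by
        have := Real.rpow_pos_of_pos hL0 (-α); positivity
      have : K ^ β * (lam * L ^ (-α)) * (R ^ (-a) * L ^ α)
          ≤ K ^ β * (lam * L ^ (-α)) * v ^ α :=
        mul_le_mul_of_nonneg_left hvα hfactor.le
      have hsimp : K ^ β * (lam * L ^ (-α)) * (R ^ (-a) * L ^ α)
          = (K ^ β * (R ^ a)⁻¹) * lam := by
        rw [Real.rpow_neg hR0.le]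
        calc K ^ β * (lam * L ^ (-α)) * ((R ^ a)⁻¹ * L ^ α)
            = (K ^ β * (R ^ a)⁻¹) * lam * (L ^ (-α) * L ^ α) := by ring
          _ = (K ^ β * (R ^ a)⁻¹) * lam := by rw [hLcancel, mul_one]
      rw [hgeq]
      calc lam = 1 * lam := (one_mul lam).symm
        _ ≤ (K ^ β * (R ^ a)⁻¹) * lam := by
            apply mul_le_mul_of_nonneg_right hKR hlam.le
        _ = K ^ β * (lam * L ^ (-α)) * (R ^ (-a) * L ^ α) := hsimp.symm
        _ ≤ K ^ β * (lam * L ^ (-α)) * v ^ α := this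
    by_contra hcon
    push_neg at hcon
    have := hgmono (Set.mem_Ioi.mpr (by positivity)) (Set.mem_Ioi.mpr hginv.1) hcon
    rw [hginv.2] at this
    linarith
  -- lower bound : K⁻¹ * Hl ≤ ginv lam
  have hlb : K⁻¹ * Hl ≤ ginv lam := by
    set w := Real.log (E + K⁻¹ * Hl) with hwdef
    have hKiH0 : 0 < K⁻¹ * Hl := by positivity
    have hw1 : 1 ≤ w := one_le_L hKiH0.le
    have hw0 : (0:ℝ) < w := by linarith
    have hKK : K * (K⁻¹ * Hl) = Hl := by field_simp
    have h1 : L / R ≤ w := by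
      rw [div_le_iff₀ hR0]
      have e5 : L ≤ M * Real.log (E + Hl) := by
        rw [div_le_iff₀ (by linarith : (0:ℝ) < M)] at hlo
        linarith [hlo]
      have e6 : Real.log (E + Hl) ≤ (2 + Real.log K) * w := by
        have := log_scale hK1 hKiH0.le
        rw [hKK] at this
        exact this
      calc L ≤ M * Real.log (E + Hl) := e5
        _ ≤ M * ((2 + Real.log K) * w) := by
            apply mul_le_mul_of_nonneg_left e6 (by linarith)
        _ = w * R := by rw [hRdef]; ring
    have h2 : w ≤ R * L := by
      have e7 : w ≤ Real.log (E + Hl) := by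
        apply Real.log_le_log (by positivity)
        have : K⁻¹ * Hl ≤ Hl := by
          apply mul_le_of_le_one_left hH0.le
          exact inv_le_one_of_one_le₀ hK1
        linarith
      have e8 : Real.log (E + Hl) ≤ R * L := by
        calc Real.log (E + Hl) ≤ M * L := hhi
          _ ≤ R * L := by nlinarith
      linarith
    have hratio := (rpow_ratio (γ := α) hR1 hL0 hw0 h1 h2).2
    -- `w ^ α ≤ R ^ |α| * L ^ α`
    have hgKH : g (K⁻¹ * Hl) ≤ lam := by
      have hgeq : g (K⁻¹ * Hl) = (K ^ β)⁻¹ * (lam * L ^ (-α)) * w ^ α := by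
        rw [hg (K⁻¹ * Hl) hKiH0, Real.mul_rpow (by positivity) hH0.le,
            Real.inv_rpow hK0.le, hHβ, hwdef]
        try ring
      have hwα : w ^ α ≤ R ^ a * L ^ α := by rw [hadef]; exact hratio
      have hfactor : (0:ℝ) < (K ^ β)⁻¹ * (lam * L ^ (-α)) := by
        have := Real.rpow_pos_of_pos hL0 (-α); positivity
      have hle : (K ^ β)⁻¹ * (lam * L ^ (-α)) * w ^ α
          ≤ (K ^ β)⁻¹ * (lam * L ^ (-α)) * (R ^ a * L ^ α) :=
        mul_le_mul_of_nonneg_left hwα hfactor.le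
      have hsimp : (K ^ β)⁻¹ * (lam * L ^ (-α)) * (R ^ a * L ^ α)
          = ((K ^ β)⁻¹ * R ^ a) * lam := by
        calc (K ^ β)⁻¹ * (lam * L ^ (-α)) * (R ^ a * L ^ α)
            = ((K ^ β)⁻¹ * R ^ a) * lam * (L ^ (-α) * L ^ α) := by ring
          _ = _ := by rw [hLcancel, mul_one]
      have hfin : (K ^ β)⁻¹ * R ^ a ≤ 1 := by
        have h11 := mul_le_mul_of_nonneg_left hKb (inv_nonneg.mpr hKβ0.le)
        rw [inv_mul_cancel₀ (ne_of_gt hKβ0)] at h11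
        linarith
      rw [hgeq]
      calc (K ^ β)⁻¹ * (lam * L ^ (-α)) * w ^ α
          ≤ ((K ^ β)⁻¹ * R ^ a) * lam := hle.trans_eq hsimp
        _ ≤ 1 * lam := mul_le_mul_of_nonneg_right hfin hlam.le
        _ = lam := one_mul lam
    by_contra hcon
    push_neg at hcon
    have := hgmono (Set.mem_Ioi.mpr hginv.1) (Set.mem_Ioi.mpr hKiH0) hcon
    rw [hginv.2] at this
    linarith [hgKH]
  exact ⟨hlb, hub⟩

set_option maxHeartbeats 1000000 in
/-- For the Zygmund-type function `g(s) = s^{p-1} log^α(e+s)` with `1 < p < n`,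
the inverse satisfies `g⁻¹(λ) ≃ λ^{1/(p-1)} log^{-α/(p-1)}(e+λ)` and consequently
`∫_r^{2r} g⁻¹(s^{1-n}) ds ≃ r^{-(n-p)/(p-1)} log^{-α/(p-1)}(e + 1/r)` for `0 < r < 1`. -/
theorem zygmund_ginv_asymptotics
    (n : ℕ) (p α : ℝ) (hn : 2 ≤ n) (hp1 : 1 < p) (hpn : p < n)
    (g ginv : ℝ → ℝ)
    (hg : ∀ s, 0 < s → g s = s ^ (p - 1) * (Real.log (Real.exp 1 + s)) ^ α)
    (hgmono : StrictMonoOn g (Set.Ioi 0))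
    (hinv : ∀ t, 0 < t → 0 < ginv t ∧ g (ginv t) = t)
    (hinv' : ∀ s, 0 < s → ginv (g s) = s) :
    ∃ c > 0,
      (∀ lam : ℝ, 0 < lam →
        c⁻¹ * (lam ^ ((1:ℝ)/(p - 1)) * (Real.log (Real.exp 1 + lam)) ^ (-α/(p - 1)))
            ≤ ginv lam ∧
        ginv lam
            ≤ c * (lam ^ ((1:ℝ)/(p - 1)) * (Real.log (Real.exp 1 + lam)) ^ (-α/(p - 1)))) ∧
      (∀ r : ℝ, 0 < r → r < 1 →
        c⁻¹ * (r ^ (-((n:ℝ) - p)/(p - 1)) * (Real.log (Real.exp 1 + 1/r)) ^ (-α/(p - 1)))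
            ≤ (∫ s in r..(2*r), ginv (s ^ ((1:ℝ) - n))) ∧
        (∫ s in r..(2*r), ginv (s ^ ((1:ℝ) - n)))
            ≤ c * (r ^ (-((n:ℝ) - p)/(p - 1)) * (Real.log (Real.exp 1 + 1/r)) ^ (-α/(p - 1)))) := by
  have h2E : (2:ℝ) ≤ Real.exp 1 := two_le_E
  have hβ : (0:ℝ) < p - 1 := by linarith
  have ha : (0:ℝ) ≤ |α| := abs_nonneg α
  have hn2 : (2:ℝ) ≤ (n:ℝ) := by exact_mod_cast hn
  obtain ⟨K, hK1, hKb⟩ := inv_bounds p α hp1 g ginv hg hgmono hinv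
  have hK0 : (0:ℝ) < K := by linarith
  have hc2a : (1:ℝ) ≤ (2:ℝ) ^ (((n:ℝ)-1)/(p-1)) :=
    Real.one_le_rpow one_le_two (div_nonneg (by linarith) hβ.le)
  have hc2b : (1:ℝ) ≤ (3*(n:ℝ)) ^ (|α|/(p-1)) :=
    Real.one_le_rpow (by linarith) (by positivity)
  set c₂ := (2:ℝ) ^ (((n:ℝ)-1)/(p-1)) * (3*(n:ℝ)) ^ (|α|/(p-1)) with hc2def
  have hc21 : 1 ≤ c₂ := by nlinarith
  have hc20 : 0 < c₂ := by linarith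
  have habsγ : |(-α/(p-1))| = |α|/(p-1) := by
    rw [abs_div, abs_neg, abs_of_pos hβ]
  refine ⟨K * c₂, by positivity, ?_, ?_⟩
  · -- Part 1
    intro lam hlam
    obtain ⟨hlo, hhi⟩ := hKb lam hlam
    have hX0 : 0 ≤ lam ^ ((1:ℝ)/(p - 1)) * (Real.log (Real.exp 1 + lam)) ^ (-α/(p - 1)) := by
      have hL1 : 1 ≤ Real.log (Real.exp 1 + lam) := one_le_L hlam.le
      positivity
    constructor
    · calc (K * c₂)⁻¹ * (lam ^ ((1:ℝ)/(p - 1)) * (Real.log (Real.exp 1 + lam)) ^ (-α/(p - 1)))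
          ≤ K⁻¹ * (lam ^ ((1:ℝ)/(p - 1)) * (Real.log (Real.exp 1 + lam)) ^ (-α/(p - 1))) := by
            apply mul_le_mul_of_nonneg_right ?_ hX0
            apply inv_anti₀ hK0
            nlinarith
        _ ≤ ginv lam := hlo
    · calc ginv lam
          ≤ K * (lam ^ ((1:ℝ)/(p - 1)) * (Real.log (Real.exp 1 + lam)) ^ (-α/(p - 1))) := hhi
        _ ≤ K * c₂ * (lam ^ ((1:ℝ)/(p - 1)) * (Real.log (Real.exp 1 + lam)) ^ (-α/(p - 1))) := by
            apply mul_le_mul_of_nonneg_right ?_ hX0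
            nlinarith
  · -- Part 2
    intro r hr0 hr1
    have hr20 : 0 < 2 * r := by linarith
    have hrle : r ≤ 2 * r := by linarith
    have hir0 : 0 < 1/r := by positivity
    have hu1 : 1 ≤ Real.log (Real.exp 1 + 1/r) := one_le_L hir0.le
    have hu0 : 0 < Real.log (Real.exp 1 + 1/r) := by linarith
    set u := Real.log (Real.exp 1 + 1/r) with hudef
    set Q := r ^ (((1:ℝ) - (n:ℝ))/(p-1)) * u ^ (-α/(p-1)) with hQdef
    have hQ0 : 0 < Q := by
      apply mul_pos (Real.rpow_pos_of_pos hr0 _) (Real.rpow_pos_of_pos hu0 _)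
    have he0 : ((1:ℝ) - (n:ℝ)) ≤ -1 := by linarith
    -- pointwise bounds
    have hpoint : ∀ s ∈ Set.Icc r (2*r),
        (K * c₂)⁻¹ * Q ≤ ginv (s ^ ((1:ℝ) - (n:ℝ)))
        ∧ ginv (s ^ ((1:ℝ) - (n:ℝ))) ≤ (K * c₂) * Q := by
      intro s hs
      have hs0 : 0 < s := lt_of_lt_of_le hr0 hs.1
      set μ := s ^ ((1:ℝ) - (n:ℝ)) with hμdef
      have hμ0 : 0 < μ := Real.rpow_pos_of_pos hs0 _
      obtain ⟨hlo, hhi⟩ := hKb μ hμ0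
      set v := Real.log (Real.exp 1 + μ) with hvdef
      have hv1 : 1 ≤ v := one_le_L hμ0.le
      have hv0 : 0 < v := by linarith
      have hμhi : μ ≤ r ^ ((1:ℝ) - (n:ℝ)) :=
        Real.rpow_le_rpow_of_nonpos hr0 hs.1 (by linarith)
      have hμlo : (2*r) ^ ((1:ℝ) - (n:ℝ)) ≤ μ :=
        Real.rpow_le_rpow_of_nonpos hs0 hs.2 (by linarith)
      -- part A : μ ^ (1/(p-1)) bounds
      have hA1 : μ ^ ((1:ℝ)/(p-1)) ≤ r ^ (((1:ℝ) - (n:ℝ))/(p-1)) := by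
        calc μ ^ ((1:ℝ)/(p-1)) ≤ (r ^ ((1:ℝ) - (n:ℝ))) ^ ((1:ℝ)/(p-1)) :=
              Real.rpow_le_rpow hμ0.le hμhi (by positivity)
          _ = r ^ (((1:ℝ) - (n:ℝ))/(p-1)) := by
              rw [← Real.rpow_mul hr0.le]
              congr 1; ring
      have hA2 : (2:ℝ) ^ (((1:ℝ) - (n:ℝ))/(p-1)) * r ^ (((1:ℝ) - (n:ℝ))/(p-1))
          ≤ μ ^ ((1:ℝ)/(p-1)) := by
        have e1 : ((2*r) ^ ((1:ℝ) - (n:ℝ))) ^ ((1:ℝ)/(p-1))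
            = (2:ℝ) ^ (((1:ℝ) - (n:ℝ))/(p-1)) * r ^ (((1:ℝ) - (n:ℝ))/(p-1)) := by
          rw [Real.mul_rpow (by norm_num) hr0.le,
              Real.mul_rpow (by positivity) (by positivity),
              ← Real.rpow_mul (by norm_num : (0:ℝ) ≤ 2), ← Real.rpow_mul hr0.le]
          congr 2 <;> ring
        rw [← e1]
        exact Real.rpow_le_rpow (by positivity) hμlo (by positivity)
      -- part B : v vs u
      have hinv_id : ∀ x : ℝ, 0 < x → x ^ ((1:ℝ) - (n:ℝ)) = (1/x) ^ ((n:ℝ) - 1) := by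
        intro x hx
        rw [one_div, Real.inv_rpow hx.le, ← Real.rpow_neg hx.le]
        congr 1; ring
      have hBhi : v ≤ (n:ℝ) * u := by
        have e2 : μ ≤ (Real.exp 1 + 1/r) ^ ((n:ℝ) - 1) := by
          calc μ ≤ r ^ ((1:ℝ) - (n:ℝ)) := hμhi
            _ = (1/r) ^ ((n:ℝ) - 1) := hinv_id r hr0
            _ ≤ (Real.exp 1 + 1/r) ^ ((n:ℝ) - 1) := by
                apply Real.rpow_le_rpow hir0.le ?_ (by linarith)
                have := Real.exp_pos 1; linarith
        have := log_comp hμ0.le hir0.le (by linarith : (1:ℝ) ≤ (n:ℝ) - 1) e2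
        calc v ≤ ((n:ℝ) - 1 + 1) * u := this
          _ = (n:ℝ) * u := by ring
      have hBlo : u ≤ 3 * v := by
        have hEμ2 : (2:ℝ) ≤ Real.exp 1 + μ := by linarith
        have hsq : (Real.exp 1 + μ) ^ ((2:ℝ)) = (Real.exp 1 + μ) * (Real.exp 1 + μ) := by
          rw [show ((2:ℝ)) = ((2:ℕ):ℝ) by norm_num, Real.rpow_natCast]
          ring
        have h1r : 1/r ≤ (Real.exp 1 + μ) ^ ((2:ℝ)) := by
          rcases le_or_gt r (1/2) with hhalf | hhalf
          · have h12r : (1:ℝ) ≤ 1/(2*r) := by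
              rw [le_div_iff₀ hr20]; linarith
            have e3 : 1/(2*r) ≤ (2*r) ^ ((1:ℝ) - (n:ℝ)) := by
              calc 1/(2*r) = (1/(2*r)) ^ ((1:ℝ)) := (Real.rpow_one _).symm
                _ ≤ (1/(2*r)) ^ ((n:ℝ) - 1) :=
                    Real.rpow_le_rpow_of_exponent_le h12r (by linarith)
                _ = (2*r) ^ ((1:ℝ) - (n:ℝ)) := (hinv_id (2*r) hr20).symm
            have e4 : 1/(2*r) ≤ μ := e3.trans hμlo
            have e5 : 1/r ≤ 2 * μ := by
              rw [div_le_iff₀ hr0] at *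
              rw [div_le_iff₀ hr20] at e4
              nlinarith
            rw [hsq]; nlinarith
          · have e6 : 1/r < 2 := by
              rw [div_lt_iff₀ hr0]; linarith
            rw [hsq]; nlinarith
        have := log_comp hir0.le hμ0.le one_le_two h1r
        calc u ≤ ((2:ℝ) + 1) * v := this
          _ = 3 * v := by ring
      -- ratio bounds for the log factor
      have h3n1 : (1:ℝ) ≤ 3 * (n:ℝ) := by linarith
      have hr1' : u / (3*(n:ℝ)) ≤ v := by
        rw [div_le_iff₀ (by linarith : (0:ℝ) < 3*(n:ℝ))]
        nlinarith
      have hr2' : v ≤ (3*(n:ℝ)) * u := by nlinarith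
      have hrat := rpow_ratio (γ := -α/(p-1)) h3n1 hu0 hv0 hr1' hr2'
      have hratlo : (3*(n:ℝ)) ^ (-(|α|/(p-1))) * u ^ (-α/(p-1)) ≤ v ^ (-α/(p-1)) := by
        have := hrat.1; rw [habsγ] at this; exact this
      have hrathi : v ^ (-α/(p-1)) ≤ (3*(n:ℝ)) ^ (|α|/(p-1)) * u ^ (-α/(p-1)) := by
        have := hrat.2; rw [habsγ] at this; exact this
      -- combine : c₂⁻¹ * Q ≤ Hμ ≤ c₂ * Q
      have hHμhi : μ ^ ((1:ℝ)/(p-1)) * v ^ (-α/(p-1)) ≤ c₂ * Q := by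
        have e7 : μ ^ ((1:ℝ)/(p-1)) * v ^ (-α/(p-1))
            ≤ r ^ (((1:ℝ) - (n:ℝ))/(p-1)) * ((3*(n:ℝ)) ^ (|α|/(p-1)) * u ^ (-α/(p-1))) := by
          apply mul_le_mul hA1 hrathi (by positivity) (by positivity)
        calc μ ^ ((1:ℝ)/(p-1)) * v ^ (-α/(p-1))
            ≤ r ^ (((1:ℝ) - (n:ℝ))/(p-1)) * ((3*(n:ℝ)) ^ (|α|/(p-1)) * u ^ (-α/(p-1))) := e7
          _ = (3*(n:ℝ)) ^ (|α|/(p-1)) * Q := by rw [hQdef]; ring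
          _ ≤ c₂ * Q := by
              apply mul_le_mul_of_nonneg_right ?_ hQ0.le
              rw [hc2def]
              nlinarith [Real.rpow_pos_of_pos (show (0:ℝ) < 3*(n:ℝ) by linarith) (|α|/(p-1))]
      have hHμlo : c₂⁻¹ * Q ≤ μ ^ ((1:ℝ)/(p-1)) * v ^ (-α/(p-1)) := by
        have e8 : c₂⁻¹ * Q
            = ((2:ℝ) ^ (((1:ℝ) - (n:ℝ))/(p-1)) * r ^ (((1:ℝ) - (n:ℝ))/(p-1)))
              * ((3*(n:ℝ)) ^ (-(|α|/(p-1))) * u ^ (-α/(p-1))) := by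
          rw [hc2def, hQdef, mul_inv, Real.rpow_neg (by linarith : (0:ℝ) ≤ 3*(n:ℝ)),
              ← Real.rpow_neg (by norm_num : (0:ℝ) ≤ (2:ℝ))]
          have : -(((n:ℝ)-1)/(p-1)) = ((1:ℝ) - (n:ℝ))/(p-1) := by ring
          rw [this]; ring
        rw [e8]
        apply mul_le_mul hA2 hratlo ?_ (by positivity)
        · positivity
      constructor
      · calc (K * c₂)⁻¹ * Q = K⁻¹ * (c₂⁻¹ * Q) := by rw [mul_inv]; ring
          _ ≤ K⁻¹ * (μ ^ ((1:ℝ)/(p-1)) * v ^ (-α/(p-1))) := by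
              apply mul_le_mul_of_nonneg_left hHμlo (by positivity)
          _ ≤ ginv μ := hlo
      · calc ginv μ ≤ K * (μ ^ ((1:ℝ)/(p-1)) * v ^ (-α/(p-1))) := hhi
          _ ≤ K * (c₂ * Q) := mul_le_mul_of_nonneg_left hHμhi hK0.le
          _ = (K * c₂) * Q := by ring
    -- monotonicity of ginv and integrability
    have hmono : ∀ t1 t2 : ℝ, 0 < t1 → t1 ≤ t2 → ginv t1 ≤ ginv t2 := by
      intro t1 t2 ht1 h12
      by_contra hcon
      push_neg at hcon
      have ht2 : 0 < t2 := lt_of_lt_of_le ht1 h12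
      have := hgmono (Set.mem_Ioi.mpr (hinv t2 ht2).1) (Set.mem_Ioi.mpr (hinv t1 ht1).1) hcon
      rw [(hinv t1 ht1).2, (hinv t2 ht2).2] at this
      linarith
    have hanti : AntitoneOn (fun s => ginv (s ^ ((1:ℝ) - (n:ℝ)))) (Set.uIcc r (2*r)) := by
      rw [Set.uIcc_of_le hrle]
      intro s1 hs1 s2 hs2 h12
      have hs10 : 0 < s1 := lt_of_lt_of_le hr0 hs1.1
      exact hmono _ _ (Real.rpow_pos_of_pos (lt_of_lt_of_le hr0 hs2.1) _)
        (Real.rpow_le_rpow_of_nonpos hs10 h12 (by linarith))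
    have hint : IntervalIntegrable (fun s => ginv (s ^ ((1:ℝ) - (n:ℝ))))
        MeasureTheory.volume r (2*r) := hanti.intervalIntegrable
    have hlowI : (2*r - r) * ((K * c₂)⁻¹ * Q) ≤ ∫ s in r..(2*r), ginv (s ^ ((1:ℝ) - (n:ℝ))) := by
      have := intervalIntegral.integral_mono_on hrle intervalIntegrable_const hint
        (fun s hs => (hpoint s hs).1)
      rwa [intervalIntegral.integral_const, smul_eq_mul] at this
    have hhiI : (∫ s in r..(2*r), ginv (s ^ ((1:ℝ) - (n:ℝ)))) ≤ (2*r - r) * ((K * c₂) * Q) := by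
      have := intervalIntegral.integral_mono_on hrle hint intervalIntegrable_const
        (fun s hs => (hpoint s hs).2)
      rwa [intervalIntegral.integral_const, smul_eq_mul] at this
    have hrQ : r * Q = r ^ (-((n:ℝ) - p)/(p - 1)) * u ^ (-α/(p-1)) := by
      rw [hQdef, ← mul_assoc]
      congr 1
      have hee : -((n:ℝ) - p)/(p - 1) = 1 + ((1:ℝ) - (n:ℝ))/(p-1) := by
        field_simp
        ring
      rw [hee, Real.rpow_add hr0, Real.rpow_one]
    constructor
    · calc (K * c₂)⁻¹ * (r ^ (-((n:ℝ) - p)/(p - 1)) * u ^ (-α/(p-1)))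
          = (2*r - r) * ((K * c₂)⁻¹ * Q) := by rw [← hrQ]; ring
        _ ≤ _ := hlowI
    · calc (∫ s in r..(2*r), ginv (s ^ ((1:ℝ) - (n:ℝ))))
          ≤ (2*r - r) * ((K * c₂) * Q) := hhiI
        _ = (K * c₂) * (r ^ (-((n:ℝ) - p)/(p - 1)) * u ^ (-α/(p-1))) := by rw [← hrQ]; ring
end
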